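/- The uniform spline space S(p,r,k) is a real vector space of dimension p + 1 + k(p - r). -/

import Mathlib

open Set Polynomial Filter

namespace SplineAux


lemma tp_contDiff : ∀ n : ℕ, ContDiff ℝ (n : ℕ∞) (fun x : ℝ => max x 0 ^ (n + 1)) := by
  intro n
  induction n with
  | zero =>
    have : ContDiff ℝ 0 (fun x : ℝ => max x 0 ^ (0 + 1)) := by
      rw [contDiff_zero]
      exact (continuous_id.max continuous_const).pow 1
    exact_mod_cast this
  | succ n ih =>
    have hderiv : ∀ x : ℝ, HasDerivAt (fun x : ℝ => max x 0 ^ (n + 2))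
        ((n + 2 : ℝ) * max x 0 ^ (n + 1)) x := by
      intro x
      rcases lt_trichotomy x 0 with hx | hx | hx
      · have h0 : (fun x : ℝ => max x 0 ^ (n + 2)) =ᶠ[nhds x] fun _ => (0:ℝ) := by
          filter_upwards [Iio_mem_nhds hx] with y hy
          have : y < 0 := hy
          simp [max_eq_right this.le]
        have h1 : HasDerivAt (fun _ : ℝ => (0:ℝ)) 0 x := hasDerivAt_const x 0
        have h2 := h1.congr_of_eventuallyEq h0
        simpa [max_eq_right hx.le] using h2
      · subst hx
        rw [hasDerivAt_iff_tendsto_slope]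
        have hb : ∀ y : ℝ, ‖slope (fun x : ℝ => max x 0 ^ (n + 2)) 0 y‖ ≤ |y| ^ (n + 1) := by
          intro y
          rcases le_or_gt y 0 with hy | hy
          · have : slope (fun x : ℝ => max x 0 ^ (n + 2)) 0 y = 0 := by
              simp [slope_def_field, max_eq_right hy, max_self]
            rw [this, norm_zero]; positivity
          · have : slope (fun x : ℝ => max x 0 ^ (n + 2)) 0 y = y ^ (n + 1) := by
              rw [slope_def_field, max_eq_left hy.le, max_self]
              rw [div_eq_iff (by simp [hy.ne'] : y - 0 ≠ (0:ℝ))]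
              ring
            rw [this, Real.norm_eq_abs, abs_pow]
        have hlim : Filter.Tendsto (fun y : ℝ => |y| ^ (n + 1)) (nhdsWithin 0 {(0:ℝ)}ᶜ) (nhds 0) := by
          have h3 : Filter.Tendsto (fun y : ℝ => |y| ^ (n + 1)) (nhds 0) (nhds (|(0:ℝ)| ^ (n+1))) :=
            (continuous_abs.pow (n+1)).tendsto 0
          simpa using h3.mono_left nhdsWithin_le_nhds
        have := squeeze_zero_norm hb hlim
        simpa [max_self] using this
      · have h0 : (fun x : ℝ => max x 0 ^ (n + 2)) =ᶠ[nhds x] fun y => y ^ (n + 2) := by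
          filter_upwards [Ioi_mem_nhds hx] with y hy
          have : (0:ℝ) < y := hy
          simp [max_eq_left this.le]
        have h1 : HasDerivAt (fun y : ℝ => y ^ (n + 2)) ((n + 2 : ℝ) * x ^ (n + 1)) x := by
          simpa using hasDerivAt_pow (n + 2) x
        have h2 := h1.congr_of_eventuallyEq h0
        simpa [max_eq_left hx.le] using h2
    have hdiff : Differentiable ℝ (fun x : ℝ => max x 0 ^ (n + 2)) :=
      fun x => (hderiv x).differentiableAt
    have hde : deriv (fun x : ℝ => max x 0 ^ (n + 2)) =
        fun x => (n + 2 : ℝ) * max x 0 ^ (n + 1) := by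
      funext x; exact (hderiv x).deriv
    have key : ContDiff ℝ ((n : ℕ∞) + 1 : WithTop ℕ∞) (fun x : ℝ => max x 0 ^ (n + 2)) := by
      rw [contDiff_succ_iff_deriv]
      refine ⟨hdiff, ?_, ?_⟩
      · intro h
        exact absurd h (by
          intro hh
          exact (WithTop.natCast_ne_top n) (by exact_mod_cast hh))
      · rw [hde]
        exact contDiff_const.mul ih
    have hcast : (((n+1 : ℕ) : ℕ∞) : WithTop ℕ∞) = ((n : ℕ∞) : WithTop ℕ∞) + 1 := by
      push_cast; ring
    show ContDiff ℝ (((n+1 : ℕ) : ℕ∞) : WithTop ℕ∞) fun x : ℝ => max x 0 ^ (n + 1 + 1)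
    rw [hcast]
    exact key


lemma iteratedDerivWithin_mem_nhds {n : ℕ} {f : ℝ → ℝ} {s : Set ℝ} {x : ℝ} (hs : s ∈ nhds x) :
    iteratedDerivWithin n f s x = iteratedDeriv n f x := by
  rw [iteratedDerivWithin_eq_iteratedFDerivWithin, iteratedDeriv_eq_iteratedFDeriv,
    ← iteratedFDerivWithin_univ]
  rw [show s = univ ∩ s by simp, iteratedFDerivWithin_inter hs]

lemma poly_iteratedDeriv (n : ℕ) (q : ℝ[X]) :
    iteratedDeriv n (fun x => q.eval x) = fun x => (Polynomial.derivative^[n] q).eval x := by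
  induction n with
  | zero => simp
  | succ n ih =>
    rw [iteratedDeriv_succ, ih]
    funext x
    rw [Function.iterate_succ_apply']
    exact Polynomial.deriv _

/-- Derivatives of the two polynomial pieces of a C^r function match at the junction. -/
lemma deriv_match {r : ℕ} {F : ℝ → ℝ} (hF : ContDiffOn ℝ (r : ℕ∞) F (Set.Icc 0 1))
    {a b t : ℝ} (h0a : 0 ≤ a) (hat : a < t) (htb : t < b) (hb1 : b ≤ 1)
    {q1 q2 : ℝ[X]} (h1 : ∀ x ∈ Icc a t, F x = q1.eval x) (h2 : ∀ x ∈ Icc t b, F x = q2.eval x) :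
    (X - C t) ^ (r + 1) ∣ q2 - q1 := by
  have hud : UniqueDiffOn ℝ (Icc (0:ℝ) 1) := uniqueDiffOn_Icc one_pos
  -- iterated derivatives match
  have hmatch : ∀ j ≤ r, (Polynomial.derivative^[j] q1).eval t
      = (Polynomial.derivative^[j] q2).eval t := by
    intro j hj
    have hcont : ContinuousOn (iteratedDerivWithin j F (Icc 0 1)) (Icc 0 1) :=
      hF.continuousOn_iteratedDerivWithin (by exact_mod_cast hj) hud
    have ht01 : t ∈ Icc (0:ℝ) 1 := ⟨h0a.trans hat.le, htb.le.trans hb1⟩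
    have key : ∀ (c d : ℝ) (q : ℝ[X]), 0 ≤ c → 1 ≤ 1 → c < d → d ≤ 1 → 0 ≤ c →
        (∀ x ∈ Icc c d, F x = q.eval x) → t ∈ Icc c d →
        iteratedDerivWithin j F (Icc 0 1) t = (Polynomial.derivative^[j] q).eval t := by
      intro c d q _ _ hcd hd1 hc0 hq htcd
      -- on Ioo c d the within-derivative equals the polynomial derivative
      have heq : ∀ x ∈ Ioo c d, iteratedDerivWithin j F (Icc 0 1) x
          = (Polynomial.derivative^[j] q).eval x := by
        intro x hx
        have hx01 : Icc (0:ℝ) 1 ∈ nhds x := by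
          refine Icc_mem_nhds ?_ ?_
          · exact lt_of_le_of_lt hc0 hx.1
          · exact lt_of_lt_of_le hx.2 hd1
        rw [iteratedDerivWithin_mem_nhds hx01]
        have hFq : F =ᶠ[nhds x] fun y => q.eval y := by
          filter_upwards [Ioo_mem_nhds hx.1 hx.2] with y hy
          exact hq y ⟨hy.1.le, hy.2.le⟩
        rw [hFq.iteratedDeriv_eq j, poly_iteratedDeriv]
      -- take limits along Ioo c d towards t
      have hne : (nhdsWithin t (Ioo c d)).NeBot := by
        apply mem_closure_iff_nhdsWithin_neBot.1
        rw [closure_Ioo hcd.ne]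
        exact htcd
      have hsub : Ioo c d ⊆ Icc (0:ℝ) 1 := fun y hy =>
        ⟨hc0.trans hy.1.le, hy.2.le.trans hd1⟩
      have l1 : Tendsto (iteratedDerivWithin j F (Icc 0 1)) (nhdsWithin t (Ioo c d))
          (nhds (iteratedDerivWithin j F (Icc 0 1) t)) := by
        have := (hcont t ht01).tendsto
        exact this.mono_left (nhdsWithin_mono t hsub)
      have l2 : Tendsto (iteratedDerivWithin j F (Icc 0 1)) (nhdsWithin t (Ioo c d))
          (nhds ((Polynomial.derivative^[j] q).eval t)) := by
        have hpc : Tendsto (fun x => (Polynomial.derivative^[j] q).eval x)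
            (nhdsWithin t (Ioo c d)) (nhds ((Polynomial.derivative^[j] q).eval t)) :=
          ((Polynomial.continuous _).tendsto t).mono_left nhdsWithin_le_nhds
        exact hpc.congr' (by
          filter_upwards [self_mem_nhdsWithin] with y hy
          exact (heq y hy).symm)
      exact tendsto_nhds_unique l1 l2
    have e1 := key a t q1 h0a le_rfl hat (htb.le.trans hb1) h0a h1 ⟨hat.le, le_rfl⟩
    have e2 := key t b q2 (h0a.trans hat.le) le_rfl htb hb1 (h0a.trans hat.le) h2 ⟨le_rfl, htb.le⟩
    rw [← e1, ← e2]
  -- translate into divisibility via Taylor expansion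
  set d := q2 - q1 with hd
  have hder : ∀ j ≤ r, (Polynomial.derivative^[j] d).eval t = 0 := by
    intro j hj
    rw [hd, Polynomial.iterate_derivative_sub]
    simp [hmatch j hj]
  have hcoeff : ∀ j < r + 1, (Polynomial.taylor t d).coeff j = 0 := by
    intro j hj
    have hj' : j ≤ r := Nat.lt_succ_iff.mp hj
    have h2' : (Nat.factorial j • Polynomial.hasseDeriv j d : ℝ[X])
        = Polynomial.derivative^[j] d :=
      congrFun (Polynomial.factorial_smul_hasseDeriv (R := ℝ) j) d
    have h1' : (Nat.factorial j : ℝ) * (Polynomial.hasseDeriv j d).eval t = 0 := by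
      have h3' : ((Nat.factorial j • Polynomial.hasseDeriv j d : ℝ[X])).eval t
          = (Polynomial.derivative^[j] d).eval t := by rw [h2']
      rw [Polynomial.eval_smul, nsmul_eq_mul] at h3'
      rw [h3']
      exact hder j hj'
    have hfac : (Nat.factorial j : ℝ) ≠ 0 := by exact_mod_cast (Nat.factorial_ne_zero j)
    rw [Polynomial.taylor_coeff]
    exact (mul_eq_zero.mp h1').resolve_left hfac
  have hdvd : X ^ (r + 1) ∣ Polynomial.taylor t d := Polynomial.X_pow_dvd_iff.mpr hcoeff
  obtain ⟨g, hg⟩ := hdvd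
  have : d = Polynomial.taylor (-t) (Polynomial.taylor t d) := by
    rw [Polynomial.taylor_taylor]
    simp
  rw [this, hg, Polynomial.taylor_mul]
  have hXpow : Polynomial.taylor (-t) ((X : ℝ[X]) ^ (r + 1)) = (X - C t) ^ (r + 1) := by
    rw [Polynomial.taylor_apply, Polynomial.pow_comp, Polynomial.X_comp, map_neg, sub_eq_add_neg]
  rw [hXpow]
  exact dvd_mul_right _ _



/-- the knots -/
noncomputable def kn (k i : ℕ) : ℝ := (i : ℝ) / ((k : ℝ) + 1)

lemma kn_mono (k : ℕ) {i j : ℕ} (h : i ≤ j) : kn k i ≤ kn k j := by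
  unfold kn
  apply div_le_div_of_nonneg_right ?_ (by positivity)
  exact_mod_cast h

lemma kn_strict (k : ℕ) {i j : ℕ} (h : i < j) : kn k i < kn k j := by
  unfold kn
  apply div_lt_div_of_pos_right ?_ (by positivity)
  exact_mod_cast h

lemma kn_zero (k : ℕ) : kn k 0 = 0 := by simp [kn]

lemma kn_last (k : ℕ) : kn k (k + 1) = 1 := by
  have : ((k:ℝ) + 1) ≠ 0 := by positivity
  unfold kn; push_cast; exact div_self this

/-- the global piecewise function -/
noncomputable def G (r k : ℕ) (q : ℝ[X]) (s : ℕ → ℝ[X]) : ℝ → ℝ := fun x =>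
  q.eval x + ∑ j ∈ Finset.range k, max (x - kn k (j + 1)) 0 ^ (r + 1) * (s j).eval x

/-- the polynomial on piece `i` -/
noncomputable def P (r k : ℕ) (q : ℝ[X]) (s : ℕ → ℝ[X]) (i : ℕ) : ℝ[X] :=
  q + ∑ j ∈ Finset.range i, (X - C (kn k (j + 1))) ^ (r + 1) * s j

lemma P_succ (r k : ℕ) (q : ℝ[X]) (s : ℕ → ℝ[X]) (i : ℕ) :
    P r k q s (i + 1) = P r k q s i + (X - C (kn k (i + 1))) ^ (r + 1) * s i := by
  unfold P
  rw [Finset.sum_range_succ, add_assoc]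

lemma pieceEq (r k : ℕ) (q : ℝ[X]) (s : ℕ → ℝ[X]) {i : ℕ} (hi : i ≤ k) {x : ℝ}
    (hx : x ∈ Icc (kn k i) (kn k (i + 1))) : G r k q s x = (P r k q s i).eval x := by
  unfold G P
  rw [Polynomial.eval_add, Polynomial.eval_finset_sum]
  congr 1
  rw [← Finset.sum_range_add_sum_Ico _ hi]
  have h2 : ∀ j ∈ Finset.Ico i k, max (x - kn k (j + 1)) 0 ^ (r + 1) * (s j).eval x = 0 := by
    intro j hj
    have : x ≤ kn k (j + 1) := hx.2.trans (kn_mono k (by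
      have := (Finset.mem_Ico.mp hj).1; omega))
    rw [max_eq_right (by linarith), zero_pow (Nat.succ_ne_zero r), zero_mul]
  rw [Finset.sum_eq_zero h2, add_zero]
  apply Finset.sum_congr rfl
  intro j hj
  have hji : j + 1 ≤ i := Finset.mem_range.mp hj
  have : kn k (j + 1) ≤ x := (kn_mono k hji).trans hx.1
  rw [Polynomial.eval_mul, Polynomial.eval_pow, Polynomial.eval_sub, Polynomial.eval_X,
    Polynomial.eval_C, max_eq_left (by linarith)]

lemma cover (k : ℕ) {x : ℝ} (hx : x ∈ Icc (0:ℝ) 1) :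
    ∃ i ≤ k, x ∈ Icc (kn k i) (kn k (i + 1)) := by
  have hk1 : (0:ℝ) < (k:ℝ) + 1 := by positivity
  set m := ⌊x * ((k:ℝ) + 1)⌋₊ with hm
  refine ⟨min m k, min_le_right _ _, ?_, ?_⟩
  · unfold kn
    rw [div_le_iff₀ hk1]
    have h1 : ((min m k : ℕ) : ℝ) ≤ (m : ℝ) := by exact_mod_cast min_le_left m k
    have hx0 : (0:ℝ) ≤ x := hx.1
    have h2 : (m : ℝ) ≤ x * ((k:ℝ) + 1) := Nat.floor_le (by positivity)
    linarith
  · unfold kn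
    rw [le_div_iff₀ hk1]
    rcases le_or_gt m k with h | h
    · rw [min_eq_left h]
      have := Nat.lt_floor_add_one (x * ((k:ℝ) + 1))
      push_cast
      linarith [Nat.lt_succ_floor (x * ((k:ℝ)+1))]
    · rw [min_eq_right h.le]
      have : x ≤ 1 := hx.2
      push_cast
      nlinarith
  
lemma poly_zero {q : ℝ[X]} {a b : ℝ} (hab : a < b) (h : ∀ x ∈ Icc a b, q.eval x = 0) :
    q = 0 :=
  q.eq_zero_of_infinite_isRoot ((Set.Icc_infinite hab).mono (fun x hx => h x hx))




theorem polyCD (q : Polynomial ℝ) (r : ℕ) : ContDiff ℝ (r : ℕ∞) (fun x : ℝ => q.eval x) := by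
  have h : AnalyticOnNhd ℝ (fun x : ℝ => q.eval x) Set.univ :=
    AnalyticOnNhd.eval_polynomial q
  rw [← contDiffOn_univ]
  exact h.contDiffOn uniqueDiffOn_univ

lemma term_degree {p r : ℕ} (hr : r + 1 ≤ p) {c : ℝ} {s : ℝ[X]}
    (hs : s.degree < ((p - r : ℕ) : WithBot ℕ)) :
    ((X - C c) ^ (r + 1) * s).degree ≤ (p : WithBot ℕ) := by
  rcases eq_or_ne s 0 with h | h
  · simp [h]
  · have hd : s.degree = (s.natDegree : WithBot ℕ) := Polynomial.degree_eq_natDegree h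
    rw [hd] at hs
    have hnd : s.natDegree < p - r := by exact_mod_cast hs
    calc ((X - C c) ^ (r + 1) * s).degree
        ≤ ((X - C c) ^ (r + 1)).degree + s.degree := Polynomial.degree_mul_le _ _
      _ = ((r + 1 : ℕ) : WithBot ℕ) + (s.natDegree : WithBot ℕ) := by
          rw [Polynomial.degree_pow, Polynomial.degree_X_sub_C, hd]; simp
      _ = (((r + 1) + s.natDegree : ℕ) : WithBot ℕ) := by push_cast; ring
      _ ≤ (p : WithBot ℕ) := by exact_mod_cast (by omega : (r + 1) + s.natDegree ≤ p)

lemma s_degree {p r : ℕ} (hr : r + 1 ≤ p) {c : ℝ} {A B s : ℝ[X]}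
    (hA : A.degree ≤ (p : WithBot ℕ)) (hB : B.degree ≤ (p : WithBot ℕ))
    (h : B - A = (X - C c) ^ (r + 1) * s) : s.degree < ((p - r : ℕ) : WithBot ℕ) := by
  rcases eq_or_ne s 0 with hs | hs
  · rw [hs, Polynomial.degree_zero]
    exact WithBot.bot_lt_coe _
  · have hdeg : ((X - C c) ^ (r + 1) * s).degree ≤ (p : WithBot ℕ) :=
      h ▸ (Polynomial.degree_sub_le _ _).trans (max_le hB hA)
    rw [Polynomial.degree_mul, Polynomial.degree_pow, Polynomial.degree_X_sub_C,
      Polynomial.degree_eq_natDegree hs] at hdeg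
    have h1 : ((r+1 : ℕ) : WithBot ℕ) + (s.natDegree : WithBot ℕ) ≤ (p : WithBot ℕ) := by
      simpa using hdeg
    have h2 : (r+1) + s.natDegree ≤ p := by exact_mod_cast h1
    rw [Polynomial.degree_eq_natDegree hs]
    exact_mod_cast (by omega : s.natDegree < p - r)


/-- extension of a finite family of polynomials to ℕ -/
noncomputable def ext (k : ℕ) (s : Fin k → ℝ[X]) : ℕ → ℝ[X] :=
  fun j => if h : j < k then s ⟨j, h⟩ else 0

lemma ext_lt {k : ℕ} (s : Fin k → ℝ[X]) {j : ℕ} (h : j < k) : ext k s j = s ⟨j, h⟩ :=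
  dif_pos h

lemma ext_add (k : ℕ) (s1 s2 : Fin k → ℝ[X]) :
    ext k (fun j => s1 j + s2 j) = fun j => ext k s1 j + ext k s2 j := by
  funext j
  unfold ext
  split <;> simp

lemma ext_smul (k : ℕ) (c : ℝ) (s : Fin k → ℝ[X]) :
    ext k (fun j => c • s j) = fun j => c • ext k s j := by
  funext j
  unfold ext
  split <;> simp

lemma G_add (r k : ℕ) (q1 q2 : ℝ[X]) (s1 s2 : ℕ → ℝ[X]) (x : ℝ) :
    G r k (q1 + q2) (fun j => s1 j + s2 j) x = G r k q1 s1 x + G r k q2 s2 x := by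
  unfold G
  simp only [Polynomial.eval_add, mul_add, Finset.sum_add_distrib]
  ring

lemma G_smul (r k : ℕ) (c : ℝ) (q : ℝ[X]) (s : ℕ → ℝ[X]) (x : ℝ) :
    G r k (c • q) (fun j => c • s j) x = c * G r k q s x := by
  unfold G
  simp only [Polynomial.eval_smul, smul_eq_mul]
  rw [mul_add, Finset.mul_sum]
  congr 1
  apply Finset.sum_congr rfl
  intros
  ring

/-- The parametrization of the spline space. -/
noncomputable def L (p r k : ℕ) :
    (Polynomial.degreeLT ℝ (p+1) × (Fin k → Polynomial.degreeLT ℝ (p-r))) →ₗ[ℝ]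
      (Set.Icc (0:ℝ) 1 → ℝ) where
  toFun qs := fun x => G r k (qs.1 : ℝ[X]) (ext k (fun j => (qs.2 j : ℝ[X]))) x.1
  map_add' a b := by
    funext x
    have h1 : (((a + b).1 : Polynomial.degreeLT ℝ (p+1)) : ℝ[X]) = (a.1 : ℝ[X]) + (b.1 : ℝ[X]) :=
      rfl
    have h2 : (fun j => (((a + b).2 j : Polynomial.degreeLT ℝ (p-r))) : Fin k → ℝ[X])
        = fun j => ((a.2 j : ℝ[X]) + (b.2 j : ℝ[X])) := rfl
    show G r k _ _ x.1 = _
    rw [h1, h2, ext_add]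
    exact G_add r k _ _ _ _ x.1
  map_smul' c a := by
    funext x
    have h1 : (((c • a).1 : Polynomial.degreeLT ℝ (p+1)) : ℝ[X]) = c • (a.1 : ℝ[X]) := rfl
    have h2 : (fun j => (((c • a).2 j : Polynomial.degreeLT ℝ (p-r))) : Fin k → ℝ[X])
        = fun j => c • (a.2 j : ℝ[X]) := rfl
    show G r k _ _ x.1 = _
    rw [h1, h2, ext_smul]
    exact G_smul r k c _ _ x.1

end SplineAux

namespace SplineAux

lemma kn_nonneg (k i : ℕ) : 0 ≤ kn k i := by unfold kn; positivity

lemma kn_le_one (k : ℕ) {i : ℕ} (h : i ≤ k + 1) : kn k i ≤ 1 := by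
  rw [← kn_last k]; exact kn_mono k h

lemma ext_ge {k : ℕ} (s : Fin k → ℝ[X]) {j : ℕ} (h : ¬ j < k) : ext k s j = 0 :=
  dif_neg h

lemma degree_le_of_lt_succ {q : ℝ[X]} {n : ℕ} (h : q.degree < ((n+1:ℕ) : WithBot ℕ)) :
    q.degree ≤ (n : WithBot ℕ) := by
  rcases eq_or_ne q 0 with h0 | h0
  · simp [h0]
  · rw [Polynomial.degree_eq_natDegree h0] at h ⊢
    exact_mod_cast Nat.lt_succ_iff.mp (by exact_mod_cast h)

end SplineAux

namespace SplineAux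

lemma G_contDiff (r k : ℕ) (q : ℝ[X]) (s : ℕ → ℝ[X]) :
    ContDiff ℝ (r : ℕ∞) (G r k q s) := by
  unfold G
  apply ContDiff.add
  · exact polyCD q r
  · apply ContDiff.sum
    intro j _
    apply ContDiff.mul
    · exact (tp_contDiff r).comp (contDiff_id.sub contDiff_const)
    · exact polyCD (s j) r

lemma P_degree {p r : ℕ} (k : ℕ) (hr : r + 1 ≤ p) {q : ℝ[X]} (hq : q.degree ≤ (p : WithBot ℕ))
    {s : ℕ → ℝ[X]} (hs : ∀ j, (s j).degree < ((p - r : ℕ) : WithBot ℕ)) (i : ℕ) :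
    (P r k q s i).degree ≤ (p : WithBot ℕ) := by
  unfold P
  apply (Polynomial.degree_add_le _ _).trans
  apply max_le hq
  apply (Polynomial.degree_sum_le _ _).trans
  apply Finset.sup_le
  intro j _
  exact term_degree hr (hs j)

end SplineAux

open SplineAux Set Polynomial in
/-- The uniform spline space `S(p,r,k)` on `[0,1]`: functions `f : [0,1] → ℝ` admitting an
extension `F : ℝ → ℝ` which is of class `C^r` on `[0,1]` and which coincides, on each
subinterval `[i/(k+1), (i+1)/(k+1)]` for `i = 0,…,k`, with a polynomial of degree at most `p`.
It is a real vector space (submodule of the functions `[0,1] → ℝ`) under pointwise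
operations. -/
def UniformSpline (p r k : ℕ) : Submodule ℝ (Set.Icc (0:ℝ) 1 → ℝ) where
  carrier := {f | ∃ F : ℝ → ℝ,
    (∀ x : Set.Icc (0:ℝ) 1, f x = F x) ∧
    ContDiffOn ℝ (r : ℕ∞) F (Set.Icc 0 1) ∧
    ∀ i : ℕ, i ≤ k → ∃ q : Polynomial ℝ, q.degree ≤ (p : WithBot ℕ) ∧
      ∀ x ∈ Set.Icc ((i : ℝ)/(k+1)) (((i : ℝ)+1)/(k+1)), F x = q.eval x}
  add_mem' := by
    rintro f g ⟨F, hfF, hF, hFq⟩ ⟨G, hgG, hG, hGq⟩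
    refine ⟨F + G, fun x => by simp [hfF x, hgG x], hF.add hG, fun i hi => ?_⟩
    obtain ⟨q1, hq1, hq1'⟩ := hFq i hi
    obtain ⟨q2, hq2, hq2'⟩ := hGq i hi
    refine ⟨q1 + q2, (Polynomial.degree_add_le _ _).trans (max_le hq1 hq2), fun x hx => ?_⟩
    simp [hq1' x hx, hq2' x hx]
  zero_mem' :=
    ⟨0, fun _ => rfl, contDiffOn_const, fun i _ => ⟨0, by simp, fun x _ => by simp⟩⟩
  smul_mem' := by
    intro c f hf
    obtain ⟨F, hfF, hF, hFq⟩ := hf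
    refine ⟨c • F, fun x => by simp [hfF x], hF.const_smul c, fun i hi => ?_⟩
    obtain ⟨q, hq, hq'⟩ := hFq i hi
    refine ⟨c • q, (Polynomial.degree_smul_le _ _).trans hq, fun x hx => ?_⟩
    simp [hq' x hx]

/-- The uniform spline space `S(p,r,k)` is a real vector space of dimension
`p + 1 + k(p - r)`. -/
theorem uniformSpline_finrank (p r k : ℕ) (hp : 1 ≤ p) (hr : r + 1 ≤ p) :
    Module.finrank ℝ (UniformSpline p r k) = p + 1 + k * (p - r) := by
  classical
  have hinj : Function.Injective (SplineAux.L p r k) := by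
    rw [← LinearMap.ker_eq_bot, LinearMap.ker_eq_bot']
    intro qs hqs
    set q : ℝ[X] := (qs.1 : ℝ[X]) with hqdef
    set s : ℕ → ℝ[X] := SplineAux.ext k (fun j => (qs.2 j : ℝ[X])) with hsdef
    have hzero : ∀ x ∈ Set.Icc (0:ℝ) 1, SplineAux.G r k q s x = 0 := by
      intro x hx
      have h := congrFun hqs ⟨x, hx⟩
      exact h
    have hPzero : ∀ i, i ≤ k → SplineAux.P r k q s i = 0 := by
      intro i hik
      apply SplineAux.poly_zero (SplineAux.kn_strict k (Nat.lt_succ_self i))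
      intro x hx
      rw [← SplineAux.pieceEq r k q s hik hx]
      apply hzero
      exact ⟨(SplineAux.kn_nonneg k i).trans hx.1,
        hx.2.trans (SplineAux.kn_le_one k (by omega))⟩
    have hq0 : q = 0 := by
      have h := hPzero 0 (Nat.zero_le k)
      simpa [SplineAux.P] using h
    have hs0 : ∀ j : Fin k, (qs.2 j : ℝ[X]) = 0 := by
      intro j
      have h1 := hPzero j.1 (le_of_lt j.2)
      have h2 := hPzero (j.1 + 1) j.2
      have h3 := SplineAux.P_succ r k q s j.1
      rw [h1, h2, zero_add] at h3
      have h4 : s j.1 = 0 := by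
        have h5 := (mul_eq_zero.mp h3.symm).resolve_left
          (pow_ne_zero _ (Polynomial.X_sub_C_ne_zero _))
        exact h5
      rw [hsdef, SplineAux.ext_lt _ j.2] at h4
      simpa using h4
    have : qs = 0 := by
      have hfst : qs.1 = 0 := Subtype.ext hq0
      have hsnd : qs.2 = 0 := by
        funext j
        exact Subtype.ext (hs0 j)
      exact Prod.ext hfst hsnd
    exact this
  have hrange : LinearMap.range (SplineAux.L p r k) = UniformSpline p r k := by
    apply le_antisymm
    · rintro f ⟨qs, rfl⟩
      refine ⟨SplineAux.G r k (qs.1 : ℝ[X]) (SplineAux.ext k fun j => (qs.2 j : ℝ[X])),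
        fun x => rfl, ?_, ?_⟩
      · exact (SplineAux.G_contDiff r k _ _).contDiffOn
      · intro i hi
        refine ⟨SplineAux.P r k (qs.1 : ℝ[X]) (SplineAux.ext k fun j => (qs.2 j : ℝ[X])) i,
          ?_, ?_⟩
        · have hq : ((qs.1 : ℝ[X])).degree ≤ (p : WithBot ℕ) :=
            SplineAux.degree_le_of_lt_succ (Polynomial.mem_degreeLT.mp qs.1.2)
          have hs : ∀ j, (SplineAux.ext k (fun j => ((qs.2 j : ℝ[X]))) j).degree
              < ((p - r : ℕ) : WithBot ℕ) := by
            intro j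
            by_cases hj : j < k
            · rw [SplineAux.ext_lt _ hj]
              exact Polynomial.mem_degreeLT.mp (qs.2 ⟨j, hj⟩).2
            · rw [SplineAux.ext_ge _ hj, Polynomial.degree_zero]
              exact WithBot.bot_lt_coe _
          exact SplineAux.P_degree k hr hq hs i
        · intro x hx
          have he : SplineAux.kn k (i+1) = ((i:ℝ)+1)/((k:ℝ)+1) := by
            unfold SplineAux.kn; push_cast; ring
          have hx' : x ∈ Set.Icc (SplineAux.kn k i) (SplineAux.kn k (i+1)) := by
            rw [he]; exact hx
          exact SplineAux.pieceEq r k _ _ hi hx'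
    · intro f hf
      obtain ⟨F, hfF, hF, hFq⟩ := hf
      have hchoice : ∀ i : ℕ, ∃ q : ℝ[X], i ≤ k → (q.degree ≤ (p : WithBot ℕ) ∧
          ∀ x ∈ Set.Icc (SplineAux.kn k i) (SplineAux.kn k (i+1)), F x = q.eval x) := by
        intro i
        by_cases hi : i ≤ k
        · obtain ⟨q, h1, h2⟩ := hFq i hi
          refine ⟨q, fun _ => ⟨h1, fun x hx => h2 x ?_⟩⟩
          have he : SplineAux.kn k (i+1) = ((i:ℝ)+1)/((k:ℝ)+1) := by
            unfold SplineAux.kn; push_cast; ring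
          rw [he] at hx
          exact hx
        · exact ⟨0, fun h => absurd h hi⟩
      choose qq hqq using hchoice
      have hsch : ∀ i : ℕ, ∃ s : ℝ[X], i < k →
          (qq (i+1) - qq i = (X - C (SplineAux.kn k (i+1)))^(r+1) * s ∧
            s.degree < ((p - r : ℕ) : WithBot ℕ)) := by
        intro i
        by_cases hik : i < k
        · obtain ⟨hd1, he1⟩ := hqq i hik.le
          obtain ⟨hd2, he2⟩ := hqq (i+1) hik
          have hdvd := SplineAux.deriv_match hF (SplineAux.kn_nonneg k i)
            (SplineAux.kn_strict k (Nat.lt_succ_self i))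
            (SplineAux.kn_strict k (Nat.lt_succ_self (i+1)))
            (SplineAux.kn_le_one k (by omega)) he1 he2
          obtain ⟨s, hs⟩ := hdvd
          exact ⟨s, fun _ => ⟨hs, SplineAux.s_degree hr hd1 hd2 hs⟩⟩
        · exact ⟨0, fun h => absurd h hik⟩
      choose ss hss using hsch
      have hq0mem : qq 0 ∈ Polynomial.degreeLT ℝ (p+1) := by
        apply Polynomial.mem_degreeLT.mpr
        exact lt_of_le_of_lt (hqq 0 (Nat.zero_le k)).1
          (by exact_mod_cast (Nat.lt_succ_self p))
      refine ⟨(⟨qq 0, hq0mem⟩, fun j => ⟨ss j.1, Polynomial.mem_degreeLT.mpr (hss j.1 j.2).2⟩), ?_⟩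
      have hP : ∀ i, i ≤ k → SplineAux.P r k (qq 0)
          (SplineAux.ext k fun j : Fin k => ss j.1) i = qq i := by
        intro i
        induction i with
        | zero => intro _; simp [SplineAux.P]
        | succ i ih =>
          intro hik
          rw [SplineAux.P_succ, ih (by omega), SplineAux.ext_lt _ (by omega : i < k),
            ← (hss i (by omega)).1]
          ring
      funext x
      obtain ⟨i, hik, hx⟩ := SplineAux.cover k x.2
      show SplineAux.G r k _ _ x.1 = f x
      rw [SplineAux.pieceEq r k _ _ hik hx, hP i hik, ← (hqq i hik).2 x.1 hx, ← hfF x]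
  haveI : Module.Finite ℝ (Polynomial.degreeLT ℝ (p+1)) :=
    Module.Finite.equiv (Polynomial.degreeLTEquiv ℝ (p+1)).symm
  haveI : Module.Finite ℝ (Polynomial.degreeLT ℝ (p-r)) :=
    Module.Finite.equiv (Polynomial.degreeLTEquiv ℝ (p-r)).symm
  rw [← hrange, LinearMap.finrank_range_of_inj hinj, Module.finrank_prod]
  have h1 : Module.finrank ℝ (Polynomial.degreeLT ℝ (p+1)) = p + 1 := by
    rw [(Polynomial.degreeLTEquiv ℝ (p+1)).finrank_eq, Module.finrank_fin_fun]
  have h2 : Module.finrank ℝ (Polynomial.degreeLT ℝ (p-r)) = p - r := by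
    rw [(Polynomial.degreeLTEquiv ℝ (p-r)).finrank_eq, Module.finrank_fin_fun]
  rw [h1, Module.finrank_pi_fintype]
  simp [h2, Finset.sum_const, Finset.card_univ]
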